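/- Let F be a field of characteristic zero and q ∈ F neither zero nor a root of unity. An irreducible polynomial p ∈ F[x,y] satisfies p(q^m x, q^n y) = c·p(x,y) for some c ∈ F and integers m, n not both zero if and only if p(x,y) = x^α y^β P(x^λ y^μ) for some polynomial P ∈ F[z] and integers α, β ≥ 0 and λ, μ not both zero (the Laurent monomial x^α y^β P(x^λ y^μ) being a polynomial). -/

import Mathlib

open MvPolynomial

lemma aux_qinj {F : Type*} [Field F] {q : F} (hq0 : q ≠ 0)
    (hqu : ∀ n : ℕ, 0 < n → q ^ n ≠ 1) {a b : ℤ} (h : q ^ a = q ^ b) : a = b := by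
  by_contra hne
  have hd : q ^ (a - b) = 1 := by
    rw [zpow_sub₀ hq0, h, div_self (zpow_ne_zero _ hq0)]
  have hsub : a - b ≠ 0 := sub_ne_zero.mpr hne
  have hpos : 0 < (a - b).natAbs := Int.natAbs_pos.mpr hsub
  have : q ^ (a - b).natAbs = 1 := by
    rcases Int.natAbs_eq (a - b) with he | he
    · rw [← zpow_natCast, ← he, hd]
    · have : q ^ (-((a-b).natAbs : ℤ)) = 1 := by rw [← he, hd]
      rw [zpow_neg, inv_eq_one, zpow_natCast] at this
      exact this
  exact hqu _ hpos this

lemma aux_dir {m n : ℤ} (h : ¬(m = 0 ∧ n = 0)) :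
    ∃ l μ : ℤ, ¬(l = 0 ∧ μ = 0) ∧
      ∀ d0 d1 : ℤ, m * d0 + n * d1 = 0 → ∃ t, d0 = t * l ∧ d1 = t * μ := by
  set g : ℤ := (Int.gcd m n : ℤ) with hg
  have hgpos : 0 < Int.gcd m n := Int.gcd_pos_iff.mpr (by tauto)
  have hgne : g ≠ 0 := by positivity
  set m' := m / g with hm'
  set n' := n / g with hn'
  have hmm : m = g * m' := by
    rw [hm', Int.mul_ediv_cancel' (Int.gcd_dvd_left _ _)]
  have hnn : n = g * n' := by
    rw [hn', Int.mul_ediv_cancel' (Int.gcd_dvd_right _ _)]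
  have hcop : IsCoprime m' n' := by
    rw [Int.isCoprime_iff_gcd_eq_one]
    exact Int.gcd_div_gcd_div_gcd hgpos
  refine ⟨n', -m', ?_, ?_⟩
  · rintro ⟨h1, h2⟩
    apply h
    constructor
    · rw [hmm]; simp [show m' = 0 by omega]
    · rw [hnn, h1, mul_zero]
  · intro d0 d1 hd
    have hd' : m' * d0 + n' * d1 = 0 := by
      have : g * (m' * d0 + n' * d1) = 0 := by rw [mul_add, ← mul_assoc, ← mul_assoc, ← hmm, ← hnn]; linarith
      exact (mul_eq_zero.mp this).resolve_left hgne
    by_cases hn0 : n' = 0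
    · have hm0 : m' ≠ 0 := by rintro h0; exact h ⟨by rw [hmm, h0, mul_zero], by rw [hnn, hn0, mul_zero]⟩
      have hd0 : d0 = 0 := by
        have := hd'
        rw [hn0, zero_mul, add_zero, mul_eq_zero] at this
        exact this.resolve_left hm0
      have hmu : m' = 1 ∨ m' = -1 := by
        have := hcop
        rw [Int.isCoprime_iff_gcd_eq_one, hn0] at this
        simp [Int.gcd] at this
        omega
      refine ⟨-d1 * m', by simp [hd0, hn0], ?_⟩
      rcases hmu with h1 | h1 <;> rw [h1] <;> ring
    · have hdvd : n' ∣ d0 := by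
        have h1 : n' ∣ m' * d0 := ⟨-d1, by linarith⟩
        exact (hcop.symm.dvd_of_dvd_mul_left h1)
      obtain ⟨t, ht⟩ := hdvd
      refine ⟨t, by rw [ht, mul_comm], ?_⟩
      have : n' * (m' * t + d1) = 0 := by rw [ht] at hd'; ring_nf; ring_nf at hd'; linarith
      have h2 := (mul_eq_zero.mp this).resolve_left hn0
      linarith [h2]

lemma aux_scale {F : Type*} [Field F] (a b : F) (p : MvPolynomial (Fin 2) F) :
    aeval ![C a * X 0, C b * X 1] p
      = ∑ s ∈ p.support, monomial s (a ^ s 0 * b ^ s 1 * coeff s p) := by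
  conv_lhs => rw [← support_sum_monomial_coeff p]
  rw [map_sum]
  refine Finset.sum_congr rfl fun s _ => ?_
  rw [aeval_monomial, Finsupp.prod_fintype _ _ (fun i => pow_zero _), Fin.prod_univ_two,
    monomial_eq, Finsupp.prod_fintype _ _ (fun i => pow_zero _), Fin.prod_univ_two]
  simp only [Matrix.cons_val_zero, Matrix.cons_val_one, Matrix.head_cons, algebraMap_eq,
    mul_pow, map_mul, map_pow]
  ring

lemma aux_coeff_scale {F : Type*} [Field F] (a b : F) (p : MvPolynomial (Fin 2) F)
    (s : Fin 2 →₀ ℕ) :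
    coeff s (aeval ![C a * X 0, C b * X 1] p) = a ^ s 0 * b ^ s 1 * coeff s p := by
  rw [aux_scale]
  rw [coeff_sum]
  by_cases hs : s ∈ p.support
  · rw [Finset.sum_eq_single s (fun v _ hv => by rw [coeff_monomial, if_neg hv])
      (fun h => absurd hs h), coeff_monomial, if_pos rfl]
  · rw [Finset.sum_eq_zero, MvPolynomial.notMem_support_iff.mp hs, mul_zero]
    intro v hv
    rw [coeff_monomial, if_neg]
    rintro rfl; exact hs hv

lemma aux_fwd {F : Type*} [Field F] (q : F) (hq0 : q ≠ 0)
    (hqu : ∀ n : ℕ, 0 < n → q ^ n ≠ 1)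
    {K : Type*} [Field K] [Algebra (MvPolynomial (Fin 2) F) K]
    [IsFractionRing (MvPolynomial (Fin 2) F) K]
    [Algebra F K] [IsScalarTower F (MvPolynomial (Fin 2) F) K]
    (p : MvPolynomial (Fin 2) F) (hp0 : p ≠ 0) (c : F) (m n : ℤ)
    (hmn : ¬(m = 0 ∧ n = 0))
    (h : MvPolynomial.aeval
        ![MvPolynomial.C (q ^ m) * (X 0 : MvPolynomial (Fin 2) F),
          MvPolynomial.C (q ^ n) * (X 1 : MvPolynomial (Fin 2) F)] p =
        MvPolynomial.C c * p) :
    ∃ (P : Polynomial F) (α β : ℕ) (l μ : ℤ), ¬(l = 0 ∧ μ = 0) ∧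
      algebraMap (MvPolynomial (Fin 2) F) K p =
        (algebraMap (MvPolynomial (Fin 2) F) K (X 0)) ^ α *
        (algebraMap (MvPolynomial (Fin 2) F) K (X 1)) ^ β *
        Polynomial.aeval
          ((algebraMap (MvPolynomial (Fin 2) F) K (X 0)) ^ l *
           (algebraMap (MvPolynomial (Fin 2) F) K (X 1)) ^ μ) P := by
  classical
  -- step 1 : the support lies on a line
  have hline : ∀ s ∈ p.support, q ^ (m * (s 0 : ℤ) + n * (s 1 : ℤ)) = c := by
    intro s hs
    have h1 := congrArg (coeff s) h
    rw [aux_coeff_scale, coeff_C_mul] at h1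
    have hcs : coeff s p ≠ 0 := mem_support_iff.mp hs
    have h2 : (q ^ m) ^ (s 0) * (q ^ n) ^ (s 1) = c := by
      exact mul_right_cancel₀ hcs h1
    rw [← h2, zpow_add₀ hq0, ← zpow_natCast (q ^ m) (s 0), ← zpow_natCast (q ^ n) (s 1),
      ← zpow_mul, ← zpow_mul]
  obtain ⟨s₁, hs₁⟩ := (support_nonempty (p := p)).mpr hp0
  have hk : ∀ s ∈ p.support,
      m * (s 0 : ℤ) + n * (s 1 : ℤ) = m * (s₁ 0 : ℤ) + n * (s₁ 1 : ℤ) := by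
    intro s hs
    exact aux_qinj hq0 hqu ((hline s hs).trans (hline s₁ hs₁).symm)
  -- step 2 : direction vector
  obtain ⟨l, μ, hlμ, hdir⟩ := aux_dir hmn
  have hts : ∀ s ∈ p.support, ∃ t : ℤ,
      (s 0 : ℤ) - (s₁ 0 : ℤ) = t * l ∧ (s 1 : ℤ) - (s₁ 1 : ℤ) = t * μ := by
    intro s hs
    exact hdir _ _ (by linarith [hk s hs])
  set t : (Fin 2 →₀ ℕ) → ℤ :=
    fun s => if hs : s ∈ p.support then (hts s hs).choose else 0 with htdef
  have htspec : ∀ s (hs : s ∈ p.support),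
      (s 0 : ℤ) - (s₁ 0 : ℤ) = t s * l ∧ (s 1 : ℤ) - (s₁ 1 : ℤ) = t s * μ := by
    intro s hs
    simp only [htdef, dif_pos hs]
    exact (hts s hs).choose_spec
  -- step 3 : minimal base point
  obtain ⟨b, hb, hbmin⟩ := Finset.exists_min_image p.support t ⟨s₁, hs₁⟩
  set τ : (Fin 2 →₀ ℕ) → ℕ := fun s => (t s - t b).toNat with hτdef
  have hτ : ∀ s ∈ p.support, (τ s : ℤ) = t s - t b := by
    intro s hs
    exact Int.toNat_of_nonneg (sub_nonneg.mpr (hbmin s hs))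
  have hco : ∀ s ∈ p.support,
      (s 0 : ℤ) = (b 0 : ℤ) + (τ s : ℤ) * l ∧ (s 1 : ℤ) = (b 1 : ℤ) + (τ s : ℤ) * μ := by
    intro s hs
    obtain ⟨h1, h2⟩ := htspec s hs
    obtain ⟨h3, h4⟩ := htspec b hb
    rw [hτ s hs]
    constructor <;> nlinarith
  -- step 4 : build P and prove the identity
  refine ⟨∑ s ∈ p.support, Polynomial.monomial (τ s) (coeff s p), b 0, b 1, l, μ, hlμ, ?_⟩
  set A : K := algebraMap (MvPolynomial (Fin 2) F) K (X 0) with hAdef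
  set B : K := algebraMap (MvPolynomial (Fin 2) F) K (X 1) with hBdef
  have hCF : ∀ r : F, algebraMap (MvPolynomial (Fin 2) F) K (C r) = algebraMap F K r :=
    fun r => by rw [← MvPolynomial.algebraMap_eq, ← IsScalarTower.algebraMap_apply]
  have hA0 : A ≠ 0 := by
    rw [hAdef, map_ne_zero_iff _ (IsFractionRing.injective (MvPolynomial (Fin 2) F) K)]
    exact MvPolynomial.X_ne_zero 0
  have hB0 : B ≠ 0 := by
    rw [hBdef, map_ne_zero_iff _ (IsFractionRing.injective (MvPolynomial (Fin 2) F) K)]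
    exact MvPolynomial.X_ne_zero 1
  rw [map_sum (Polynomial.aeval (A ^ l * B ^ μ)), Finset.mul_sum]
  conv_lhs => rw [← support_sum_monomial_coeff p]
  rw [map_sum]
  refine Finset.sum_congr rfl fun s hs => ?_
  obtain ⟨he0, he1⟩ := hco s hs
  have hA1 : A ^ (b 0) * (A ^ l) ^ (τ s) = A ^ (s 0) := by
    rw [← zpow_natCast A (b 0), ← zpow_natCast (A ^ l) (τ s), ← zpow_mul,
      ← zpow_add₀ hA0, ← zpow_natCast A (s 0)]
    congr 1
    rw [he0]; ring
  have hB1 : B ^ (b 1) * (B ^ μ) ^ (τ s) = B ^ (s 1) := by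
    rw [← zpow_natCast B (b 1), ← zpow_natCast (B ^ μ) (τ s), ← zpow_mul,
      ← zpow_add₀ hB0, ← zpow_natCast B (s 1)]
    congr 1
    rw [he1]; ring
  rw [monomial_eq, Finsupp.prod_fintype _ _ (fun i => pow_zero _), Fin.prod_univ_two,
    map_mul, map_mul, map_pow, map_pow, hCF, Polynomial.aeval_monomial, mul_pow]
  calc algebraMap F K (coeff s p) * (A ^ (s 0) * B ^ (s 1))
      = algebraMap F K (coeff s p) * ((A ^ (b 0) * (A ^ l) ^ (τ s)) * (B ^ (b 1) * (B ^ μ) ^ (τ s))) := by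
        rw [hA1, hB1]
    _ = A ^ (b 0) * B ^ (b 1) * (algebraMap F K (coeff s p) * ((A ^ l) ^ (τ s) * (B ^ μ) ^ (τ s))) := by
        ring

lemma aux_bwd {F : Type*} [Field F] (q : F) (hq0 : q ≠ 0)
    {K : Type*} [Field K] [Algebra (MvPolynomial (Fin 2) F) K]
    [IsFractionRing (MvPolynomial (Fin 2) F) K]
    [Algebra F K] [IsScalarTower F (MvPolynomial (Fin 2) F) K]
    (p : MvPolynomial (Fin 2) F) (P : Polynomial F) (α β : ℕ) (l μ : ℤ)
    (hyp : algebraMap (MvPolynomial (Fin 2) F) K p =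
        (algebraMap (MvPolynomial (Fin 2) F) K (X 0)) ^ α *
        (algebraMap (MvPolynomial (Fin 2) F) K (X 1)) ^ β *
        Polynomial.aeval
          ((algebraMap (MvPolynomial (Fin 2) F) K (X 0)) ^ l *
           (algebraMap (MvPolynomial (Fin 2) F) K (X 1)) ^ μ) P) :
    MvPolynomial.aeval
        ![MvPolynomial.C (q ^ (μ : ℤ)) * (X 0 : MvPolynomial (Fin 2) F),
          MvPolynomial.C (q ^ (-l : ℤ)) * (X 1 : MvPolynomial (Fin 2) F)] p =
      MvPolynomial.C ((q ^ (μ : ℤ)) ^ α * (q ^ (-l : ℤ)) ^ β) * p := by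
  classical
  set m : ℤ := μ with hm
  set n : ℤ := -l with hn
  set σ : MvPolynomial (Fin 2) F →ₐ[F] MvPolynomial (Fin 2) F :=
    MvPolynomial.aeval ![C (q ^ m) * X 0, C (q ^ n) * X 1] with hσ
  set σ' : MvPolynomial (Fin 2) F →ₐ[F] MvPolynomial (Fin 2) F :=
    MvPolynomial.aeval ![C (q ^ (-m)) * X 0, C (q ^ (-n)) * X 1] with hσ'
  have hcomp : σ'.comp σ = AlgHom.id F (MvPolynomial (Fin 2) F) := by
    apply MvPolynomial.algHom_ext
    intro i
    fin_cases i <;>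
    · simp only [AlgHom.comp_apply, AlgHom.id_apply, hσ, hσ', Fin.isValue, Fin.zero_eta,
        Fin.mk_one, aeval_X, Matrix.cons_val_zero, Matrix.cons_val_one, Matrix.head_cons,
        map_mul, aeval_C, algebraMap_eq]
      rw [← mul_assoc, ← C_mul, ← zpow_add₀ hq0]
      simp
  have hli : Function.LeftInverse σ' σ := fun x => by
    rw [← AlgHom.comp_apply, hcomp]; rfl
  have hσinj : Function.Injective σ := hli.injective
  have hginj : Function.Injective
      ((algebraMap (MvPolynomial (Fin 2) F) K).comp σ.toRingHom) :=
    (IsFractionRing.injective (MvPolynomial (Fin 2) F) K).comp hσinj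
  set ψ : K →+* K := IsFractionRing.lift hginj with hψ
  have key : ∀ x : MvPolynomial (Fin 2) F,
      ψ (algebraMap (MvPolynomial (Fin 2) F) K x)
        = algebraMap (MvPolynomial (Fin 2) F) K (σ x) := fun x =>
    IsFractionRing.lift_algebraMap hginj x
  have hCF : ∀ r : F, algebraMap (MvPolynomial (Fin 2) F) K (C r) = algebraMap F K r :=
    fun r => by rw [← MvPolynomial.algebraMap_eq, ← IsScalarTower.algebraMap_apply]
  have hψF : ∀ r : F, ψ (algebraMap F K r) = algebraMap F K r := fun r => by
    rw [← hCF, key, hσ, aeval_C, algebraMap_eq, hCF]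
  have hψA : ψ (algebraMap (MvPolynomial (Fin 2) F) K (X 0))
      = algebraMap F K (q ^ m) * algebraMap (MvPolynomial (Fin 2) F) K (X 0) := by
    rw [key, hσ, aeval_X]
    simp only [Matrix.cons_val_zero, map_mul, hCF]
  have hψB : ψ (algebraMap (MvPolynomial (Fin 2) F) K (X 1))
      = algebraMap F K (q ^ n) * algebraMap (MvPolynomial (Fin 2) F) K (X 1) := by
    rw [key, hσ, aeval_X]
    simp only [Matrix.cons_val_one, Matrix.head_cons, Matrix.cons_val_zero, map_mul, hCF]
  set A : K := algebraMap (MvPolynomial (Fin 2) F) K (X 0) with hA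
  set B : K := algebraMap (MvPolynomial (Fin 2) F) K (X 1) with hB
  have hψz : ψ (A ^ l * B ^ m) = A ^ l * B ^ m := by
    rw [map_mul, map_zpow₀, map_zpow₀, hψA, hψB, mul_zpow, mul_zpow,
      ← map_zpow₀ (algebraMap F K), ← map_zpow₀ (algebraMap F K),
      ← zpow_mul, ← zpow_mul]
    have : algebraMap F K (q ^ (m * l)) * A ^ l * (algebraMap F K (q ^ (n * m)) * B ^ m)
        = algebraMap F K (q ^ (m * l) * q ^ (n * m)) * (A ^ l * B ^ m) := by
      rw [map_mul]; ring
    rw [this, ← zpow_add₀ hq0]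
    have hz : m * l + n * m = 0 := by rw [hm, hn]; ring
    rw [hz, zpow_zero, map_one, one_mul]
  have hψaF : ψ.comp (algebraMap F K) = algebraMap F K := RingHom.ext hψF
  -- main computation
  apply IsFractionRing.injective (MvPolynomial (Fin 2) F) K
  have lhs : algebraMap (MvPolynomial (Fin 2) F) K
      ((MvPolynomial.aeval
        ![MvPolynomial.C (q ^ m) * (X 0 : MvPolynomial (Fin 2) F),
          MvPolynomial.C (q ^ n) * (X 1 : MvPolynomial (Fin 2) F)]) p)
      = ψ (algebraMap (MvPolynomial (Fin 2) F) K p) := (key p).symm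
  rw [lhs, hyp, map_mul, map_mul, map_pow, map_pow, hψA, hψB]
  rw [Polynomial.aeval_def, Polynomial.hom_eval₂, hψaF, hψz, ← Polynomial.aeval_def]
  rw [map_mul, hCF, hyp, map_mul, map_pow, map_pow, mul_pow, mul_pow]
  ring

/-- q-shift case characterization of integer-linear irreducible bivariate polynomials:
`p(q^m x, q^n y) = c p(x,y)` for some `c ∈ F` and integers `m, n` not both zero iff
`p = x^α y^β P(x^λ y^μ)` (in the Laurent sense, interpreted in the fraction field)
for some `P ∈ F[z]`, `α, β ∈ ℕ` and integers `λ, μ` not both zero. -/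
theorem stmt17 (F : Type*) [Field F] [CharZero F] (q : F) (hq0 : q ≠ 0)
    (hqu : ∀ n : ℕ, 0 < n → q ^ n ≠ 1)
    (p : MvPolynomial (Fin 2) F) (hp : Irreducible p) :
    (∃ (c : F) (m n : ℤ), ¬(m = 0 ∧ n = 0) ∧
      MvPolynomial.aeval
        ![MvPolynomial.C (q ^ m) * (X 0 : MvPolynomial (Fin 2) F),
          MvPolynomial.C (q ^ n) * (X 1 : MvPolynomial (Fin 2) F)] p =
        MvPolynomial.C c * p) ↔
    (∃ (P : Polynomial F) (α β : ℕ) (l μ : ℤ), ¬(l = 0 ∧ μ = 0) ∧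
      algebraMap (MvPolynomial (Fin 2) F) (FractionRing (MvPolynomial (Fin 2) F)) p =
        (algebraMap (MvPolynomial (Fin 2) F) (FractionRing (MvPolynomial (Fin 2) F))
            (X 0)) ^ α *
        (algebraMap (MvPolynomial (Fin 2) F) (FractionRing (MvPolynomial (Fin 2) F))
            (X 1)) ^ β *
        Polynomial.aeval
          ((algebraMap (MvPolynomial (Fin 2) F) (FractionRing (MvPolynomial (Fin 2) F))
              (X 0)) ^ l *
           (algebraMap (MvPolynomial (Fin 2) F) (FractionRing (MvPolynomial (Fin 2) F))
              (X 1)) ^ μ) P) := by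
  constructor
  · rintro ⟨c, m, n, hmn, h⟩
    exact aux_fwd q hq0 hqu p hp.ne_zero c m n hmn h
  · rintro ⟨P, α, β, l, μ, hlμ, hyp⟩
    refine ⟨(q ^ (μ : ℤ)) ^ α * (q ^ (-l : ℤ)) ^ β, μ, -l, ?_, aux_bwd q hq0 p P α β l μ hyp⟩
    rintro ⟨h1, h2⟩
    exact hlμ ⟨by omega, h1⟩
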